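/- Let X be a pure k-dimensional simplicial complex, f : X(k) → {±1}, X̂ the f-local lift, and σ̂ ∈ X̂ with σ = π(σ̂). If dim(σ̂) < k-2, then the second largest in absolute value eigenvalue of the random walk matrix of the 1-skeleton of X̂_{σ̂} equals that of X_σ. If dim(σ̂) = k-2, then the spectrum of the random walk matrix of X̂_{σ̂} is the union (with multiplicity) of the spectrum of the random walk matrix A_σ of X_σ and the spectrum of the signed matrix A_σ^{f_{σ̂}}. -/

import Mathlib

open scoped Classical
noncomputable section

namespace HDX

variable {V W : Type*}

/-- sign of a Bool as an integer (`true ↦ 1`, `false ↦ -1`). -/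
def sgn (b : Bool) : ℤ := if b then 1 else -1

/-- projection forgetting signs -/
def proj [DecidableEq V] (σ : Finset (V × Bool)) : Finset V := σ.image Prod.fst

/-- product of the signs of a decorated face -/
def signF (σ : Finset (V × Bool)) : ℤ := ∏ x ∈ σ, sgn x.2

/-- the `f`-local lift of a `k`-dimensional complex `X` -/
def localLift [Fintype V] [DecidableEq V] (X : Finset (Finset V)) (f : Finset V → ℤ)
    (k : ℕ) : Finset (Finset (V × Bool)) :=
  Finset.univ.filter (fun σ' => proj σ' ∈ X ∧ σ'.card = (proj σ').card ∧
    (σ'.card = k + 1 → signF σ' = f (proj σ')))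

/-- the link of a face -/
def link [DecidableEq W] (X : Finset (Finset W)) (σ : Finset W) : Finset (Finset W) :=
  (X.filter (fun τ => σ ⊆ τ)).image (fun τ => τ \ σ)

/-- degree of a face: the number of faces of one higher dimension containing it -/
def deg [DecidableEq W] (X : Finset (Finset W)) (σ : Finset W) : ℕ :=
  (X.filter (fun τ => σ ⊆ τ ∧ τ.card = σ.card + 1)).card

/-- a simplicial complex: downward closed (to nonempty subsets) -/
def DownwardClosed (X : Finset (Finset W)) : Prop :=
  ∀ τ ∈ X, ∀ σ : Finset W, σ ⊆ τ → σ.Nonempty → σ ∈ X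

/-- pure `k`-dimensional -/
def Pure (X : Finset (Finset W)) (k : ℕ) : Prop :=
  (∀ τ ∈ X, τ.card ≤ k + 1) ∧ ∀ τ ∈ X, ∃ ρ ∈ X, τ ⊆ ρ ∧ ρ.card = k + 1

/-- `(d 0, …, d (k-1))`-regular -/
def Regular (X : Finset (Finset W)) (k : ℕ) (d : ℕ → ℕ) : Prop :=
  ∀ i < k, ∀ σ ∈ X, σ.card = i + 1 → deg X σ = d i

/-- the vertices of the link of `σ` -/
def linkVert [DecidableEq W] (X : Finset (Finset W)) (σ : Finset W) : Type _ :=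
  {v : W // {v} ∈ link X σ}

instance [Fintype W] [DecidableEq W] (X : Finset (Finset W)) (σ : Finset W) :
    Fintype (linkVert X σ) := Subtype.fintype _

instance [DecidableEq W] (X : Finset (Finset W)) (σ : Finset W) :
    DecidableEq (linkVert X σ) := Subtype.instDecidableEq

/-- random walk matrix of the 1-skeleton of the link of `σ`, normalized by `dreg` -/
def linkRW [Fintype W] [DecidableEq W] (X : Finset (Finset W)) (σ : Finset W) (dreg : ℕ) :
    Matrix (linkVert X σ) (linkVert X σ) ℝ :=
  fun u w => if u.1 ≠ w.1 ∧ {u.1, w.1} ∈ link X σ then (dreg : ℝ)⁻¹ else 0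

/-- signed random walk matrix of the 1-skeleton of the link of `σ` -/
def linkRWSigned [Fintype W] [DecidableEq W] (X : Finset (Finset W)) (σ : Finset W)
    (dreg : ℕ) (g : Finset W → ℤ) : Matrix (linkVert X σ) (linkVert X σ) ℝ :=
  fun u w => if u.1 ≠ w.1 ∧ {u.1, w.1} ∈ link X σ then (g {u.1, w.1} : ℝ) / (dreg : ℝ) else 0

/-- largest absolute value of the eigenvalues other than (one copy of) the trivial
eigenvalue `1`, of a matrix: computed via the roots of the characteristic polynomial. -/
def lam {n : Type*} [Fintype n] [DecidableEq n] (M : Matrix n n ℝ) : ℝ :=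
  (((M.charpoly.roots).erase 1).map (fun x => |x|)).fold max 0

/-- `λ`-two sided high dimensional expander (links normalized by their regular degrees) -/
def IsHDX [Fintype W] [DecidableEq W] (X : Finset (Finset W)) (k : ℕ) (d : ℕ → ℕ)
    (l : ℝ) : Prop :=
  ∀ σ : Finset W, (σ = ∅ ∨ σ ∈ X) → σ.card ≤ k - 1 → lam (linkRW X σ (d σ.card)) ≤ l

/-- the ordered pairs in `S × T` that form an edge of the link of `σ` -/
def pairs [DecidableEq W] (X : Finset (Finset W)) (σ : Finset W) (S T : Finset W) :
    Finset (W × W) :=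
  (S ×ˢ T).filter (fun p => p.1 ≠ p.2 ∧ {p.1, p.2} ∈ link X σ)

/-- `⟨1_S, A_σ 1_T⟩` for the random walk matrix of the link of `σ` -/
def innerRW [DecidableEq W] (X : Finset (Finset W)) (σ : Finset W) (dtop : ℕ)
    (S T : Finset W) : ℝ :=
  ((pairs X σ S T).card : ℝ) / (dtop : ℝ)

/-- `⟨1_S, A_σ^g 1_T⟩` for the `g`-signed random walk matrix of the link of `σ` -/
def innerRWSigned [DecidableEq W] (X : Finset (Finset W)) (σ : Finset W) (dtop : ℕ)
    (g : Finset W → ℤ) (S T : Finset W) : ℝ :=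
  (∑ p ∈ pairs X σ S T, (g {p.1, p.2} : ℝ)) / (dtop : ℝ)

/-- `(β, t)`-sparseness -/
def IsSparse [Fintype W] [DecidableEq W] (X : Finset (Finset W)) (k dtop : ℕ)
    (β t : ℝ) : Prop :=
  ∀ σ ∈ X, σ.card = k - 1 → ∀ S T : Finset W,
    (∀ v ∈ S ∪ T, {v} ∈ link X σ) → ((S ∪ T).card : ℝ) ≤ t →
    innerRW X σ dtop S T ≤ β * Real.sqrt ((S.card : ℝ) * (T.card : ℝ))

section Aux
open Polynomial Matrix

/-! ### Auxiliary lemmas -/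

lemma det_fromBlocks_comm' {R n : Type*} [CommRing R] [Fintype n] [DecidableEq n]
    (A B : Matrix n n R) :
    (fromBlocks A B B A).det = (A + B).det * (A - B).det := by
  have h : fromBlocks (1:Matrix n n R) 1 0 1 * fromBlocks A B B A * fromBlocks 1 (-1) 0 1
      = fromBlocks (A+B) 0 B (A-B) := by
    simp only [Matrix.fromBlocks_multiply]
    simp
    constructor <;> abel
  have := congrArg Matrix.det h
  rw [Matrix.det_mul, Matrix.det_mul, Matrix.det_fromBlocks_zero₂₁,
    Matrix.det_fromBlocks_zero₂₁, Matrix.det_fromBlocks_zero₁₂] at this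
  simpa using this

lemma charpoly_fromBlocks_comm' {n : Type*} [Fintype n] [DecidableEq n]
    (A B : Matrix n n ℝ) :
    (Matrix.fromBlocks A B B A).charpoly = (A + B).charpoly * (A - B).charpoly := by
  have h1 : charmatrix (A + B) = charmatrix A - B.map C := by
    simp [charmatrix, Matrix.map_add]; abel
  have h2 : charmatrix (A - B) = charmatrix A + B.map C := by
    simp [charmatrix, Matrix.map_sub]; abel
  rw [Matrix.charpoly, Matrix.charmatrix_fromBlocks, Matrix.charpoly, Matrix.charpoly,
    det_fromBlocks_comm', h1, h2, sub_neg_eq_add, ← sub_eq_add_neg]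

lemma charpoly_zero' {n : Type*} [Fintype n] [DecidableEq n] :
    (0 : Matrix n n ℝ).charpoly = X ^ Fintype.card n := by
  rw [Matrix.charpoly, Matrix.charmatrix]
  simp [Matrix.scalar, Matrix.det_diagonal]

lemma fold_max_nonneg (s : Multiset ℝ) : 0 ≤ s.fold max 0 := by
  induction s using Multiset.induction_on with
  | empty => simp
  | cons a s ih => rw [Multiset.fold_cons_left]; exact ih.trans (le_max_right _ _)

lemma fold_max_add_zeros (s : Multiset ℝ) (r : ℕ) :
    (s + Multiset.replicate r 0).fold max 0 = s.fold max 0 := by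
  induction r with
  | zero => simp
  | succ r ih =>
    rw [Multiset.replicate_succ, Multiset.add_cons, Multiset.fold_cons_left,
      max_eq_right (by rw [ih]; exact fold_max_nonneg s), ih]

lemma lam_eq_of_charpoly {n m : Type*} [Fintype n] [DecidableEq n] [Fintype m] [DecidableEq m]
    (M : Matrix n n ℝ) (N : Matrix m m ℝ) (r : ℕ)
    (h : N.charpoly = M.charpoly * X ^ r) : lam N = lam M := by
  have hM : M.charpoly ≠ 0 := (Matrix.charpoly_monic M).ne_zero
  have hroots : N.charpoly.roots = M.charpoly.roots + Multiset.replicate r 0 := by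
    rw [h, Polynomial.roots_mul (mul_ne_zero hM (pow_ne_zero _ Polynomial.X_ne_zero)),
      Polynomial.roots_pow, Polynomial.roots_X, Multiset.nsmul_singleton]
  unfold lam
  rw [hroots]
  have he : (M.charpoly.roots + Multiset.replicate r 0).erase 1
      = M.charpoly.roots.erase 1 + Multiset.replicate r 0 := by
    by_cases h1 : (1:ℝ) ∈ M.charpoly.roots
    · exact Multiset.erase_add_left_pos _ h1
    · rw [Multiset.erase_of_notMem, Multiset.erase_of_notMem h1]
      simp only [Multiset.mem_add, Multiset.mem_replicate]
      rintro (h | ⟨-, h⟩)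
      · exact h1 h
      · norm_num at h
  rw [he, Multiset.map_add]
  have : (Multiset.replicate r (0:ℝ)).map (fun x => |x|) = Multiset.replicate r 0 := by
    rw [Multiset.map_replicate]; norm_num
  rw [this, fold_max_add_zeros]

/-! ### Combinatorics of links in the local lift -/

lemma mem_link_iff [DecidableEq W] (X : Finset (Finset W)) (σ s : Finset W) :
    s ∈ link X σ ↔ Disjoint s σ ∧ σ ∪ s ∈ X := by
  constructor
  · intro h
    simp only [link, Finset.mem_image, Finset.mem_filter] at h
    obtain ⟨τ, ⟨hτ, hsub⟩, rfl⟩ := h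
    exact ⟨Finset.sdiff_disjoint, by rwa [Finset.union_sdiff_of_subset hsub]⟩
  · rintro ⟨hd, hX⟩
    simp only [link, Finset.mem_image, Finset.mem_filter]
    exact ⟨σ ∪ s, ⟨hX, Finset.subset_union_left⟩, Finset.union_sdiff_cancel_left hd.symm⟩

lemma mem_localLift_iff [Fintype V] [DecidableEq V] (X : Finset (Finset V)) (f : Finset V → ℤ)
    (k : ℕ) (τ : Finset (V × Bool)) :
    τ ∈ localLift X f k ↔ proj τ ∈ X ∧ τ.card = (proj τ).card ∧
      (τ.card = k + 1 → signF τ = f (proj τ)) := by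
  simp [localLift]

lemma union_single {α : Type*} [DecidableEq α] (s : Finset α) (a : α) :
    s ∪ {a} = insert a s := by rw [Finset.union_comm, ← Finset.insert_eq]

lemma sgn_mul_self (b : Bool) : sgn b * sgn b = 1 := by cases b <;> simp [sgn]

lemma signF_mul_self (σ : Finset (V × Bool)) : signF σ * signF σ = 1 := by
  rw [signF, ← Finset.prod_mul_distrib]
  exact Finset.prod_eq_one (fun x _ => sgn_mul_self x.2)

variable [Fintype V] [DecidableEq V] {X : Finset (Finset V)} {f : Finset V → ℤ} {k : ℕ}
  {σ' : Finset (V × Bool)}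

lemma vert_iff (hmem : σ' ∈ localLift X f k) (h1 : σ'.card + 1 ≤ k) (v : V) (b : Bool) :
    {(v,b)} ∈ link (localLift X f k) σ' ↔ {v} ∈ link X (proj σ') := by
  obtain ⟨hX, hc, -⟩ := (mem_localLift_iff X f k σ').1 hmem
  rw [mem_link_iff, mem_link_iff, mem_localLift_iff]
  have hproj : proj (σ' ∪ {(v,b)}) = proj σ' ∪ {v} := by
    simp [proj, Finset.image_union]
  constructor
  · rintro ⟨hd, hpX, hcard, -⟩
    rw [hproj] at hpX hcard
    have hvb : (v,b) ∉ σ' := by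
      simpa [Finset.disjoint_left] using hd
    have h2 : (σ' ∪ {(v,b)}).card = σ'.card + 1 := by
      rw [union_single, Finset.card_insert_of_notMem hvb]
    have hv : v ∉ proj σ' := by
      intro hv
      rw [h2, union_single, Finset.insert_eq_self.2 hv] at hcard
      omega
    exact ⟨Finset.disjoint_singleton_left.2 hv, hpX⟩
  · rintro ⟨hd, hX2⟩
    have hv : v ∉ proj σ' := Finset.disjoint_singleton_left.1 hd
    have hvb : (v,b) ∉ σ' := fun h => hv (Finset.mem_image_of_mem Prod.fst h)
    refine ⟨Finset.disjoint_singleton_left.2 hvb, ?_, ?_, ?_⟩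
    · rw [hproj]; exact hX2
    · rw [hproj, union_single (proj σ'), Finset.card_insert_of_notMem hv,
        union_single, Finset.card_insert_of_notMem hvb, hc]
    · intro hcc
      rw [union_single, Finset.card_insert_of_notMem hvb] at hcc
      omega

lemma proj_union_pair (u w : V) (b c : Bool) :
    proj (σ' ∪ {(u,b),(w,c)}) = proj σ' ∪ {u,w} := by
  simp [proj, Finset.image_union, Finset.image_insert]

lemma not_mem_link_same_fst (hmem : σ' ∈ localLift X f k) (u : V) (b c : Bool) (hbc : b ≠ c) :
    {(u,b),(u,c)} ∉ link (localLift X f k) σ' := by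
  obtain ⟨hXm, hc, -⟩ := (mem_localLift_iff X f k σ').1 hmem
  rw [mem_link_iff, mem_localLift_iff]
  rintro ⟨hd, -, hcard, -⟩
  have hne : ((u,b) : V × Bool) ≠ (u,c) := by simp [hbc]
  have h2 : (σ' ∪ {(u,b),(u,c)}).card = σ'.card + 2 := by
    rw [Finset.card_union_of_disjoint hd.symm, Finset.card_insert_of_notMem (by simp [hne]),
      Finset.card_singleton]
  rw [h2, proj_union_pair] at hcard
  have h3 : (proj σ' ∪ {u,u}).card ≤ (proj σ').card + 1 := by
    rw [Finset.pair_eq_singleton, union_single]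
    exact (Finset.card_insert_le _ _).trans (by omega)
  omega

lemma edge_iff (hmem : σ' ∈ localLift X f k) (h1 : σ'.card + 1 ≤ k)
    (u w : V) (hne : u ≠ w) (b c : Bool) :
    {(u,b),(w,c)} ∈ link (localLift X f k) σ' ↔
      ({u,w} ∈ link X (proj σ') ∧
        (σ'.card + 2 = k + 1 → signF σ' * (sgn b * sgn c) = f (proj σ' ∪ {u,w}))) := by
  obtain ⟨hXm, hc, -⟩ := (mem_localLift_iff X f k σ').1 hmem
  rw [mem_link_iff, mem_link_iff, mem_localLift_iff, proj_union_pair]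
  have hpne : ((u,b) : V × Bool) ≠ (w,c) := by simp [hne]
  constructor
  · rintro ⟨hd, hpX, hcard, hsign⟩
    have hub : (u,b) ∉ σ' := Finset.disjoint_left.1 hd (by simp)
    have hwc : (w,c) ∉ σ' := Finset.disjoint_left.1 hd (by simp)
    have h2 : (σ' ∪ {(u,b),(w,c)}).card = σ'.card + 2 := by
      rw [Finset.card_union_of_disjoint hd.symm, Finset.card_insert_of_notMem (by simp [hpne]),
        Finset.card_singleton]
    have huσ : u ∉ proj σ' ∧ w ∉ proj σ' := by
      by_contra hcon
      have hpair : proj σ' ∪ {u,w} = insert u (insert w (proj σ')) := by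
        rw [Finset.union_comm, Finset.insert_union,
          Finset.union_comm ({w} : Finset V) (proj σ'), union_single]
      have h3 : (proj σ' ∪ {u,w}).card < (proj σ').card + 2 := by
        rcases not_and_or.1 hcon with h | h
        · push_neg at h
          rw [hpair, Finset.insert_eq_self.2 (Finset.mem_insert_of_mem h)]
          calc (insert w (proj σ')).card ≤ (proj σ').card + 1 := Finset.card_insert_le _ _
            _ < (proj σ').card + 2 := by omega
        · push_neg at h
          rw [hpair, Finset.insert_eq_self.2 h]
          calc (insert u (proj σ')).card ≤ (proj σ').card + 1 := Finset.card_insert_le _ _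
            _ < (proj σ').card + 2 := by omega
      rw [← hcard, h2] at h3
      omega
    have hdj : Disjoint ({u,w} : Finset V) (proj σ') := by
      rw [Finset.disjoint_left]
      intro a ha
      rcases Finset.mem_insert.1 ha with rfl | ha
      · exact fun hh => huσ.1 hh
      · rw [Finset.mem_singleton] at ha; subst ha; exact fun hh => huσ.2 hh
    refine ⟨⟨hdj, hpX⟩, ?_⟩
    intro hk
    have := hsign (by omega)
    rw [← this]
    unfold signF
    rw [Finset.prod_union hd.symm, Finset.prod_insert (by simp [hpne]), Finset.prod_singleton]
  · rintro ⟨⟨hdj, hpX⟩, hsg⟩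
    have huσ : u ∉ proj σ' := Finset.disjoint_left.1 hdj (by simp)
    have hwσ : w ∉ proj σ' := Finset.disjoint_left.1 hdj (by simp)
    have hub : (u,b) ∉ σ' := fun h => huσ (Finset.mem_image_of_mem Prod.fst h)
    have hwc : (w,c) ∉ σ' := fun h => hwσ (Finset.mem_image_of_mem Prod.fst h)
    have hd : Disjoint ({(u,b),(w,c)} : Finset (V × Bool)) σ' := by
      rw [Finset.disjoint_left]
      intro a ha
      rcases Finset.mem_insert.1 ha with rfl | ha
      · exact hub
      · rw [Finset.mem_singleton] at ha; subst ha; exact hwc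
    have h2 : (σ' ∪ {(u,b),(w,c)}).card = σ'.card + 2 := by
      rw [Finset.card_union_of_disjoint hd.symm, Finset.card_insert_of_notMem (by simp [hpne]),
        Finset.card_singleton]
    have h3 : (proj σ' ∪ {u,w}).card = (proj σ').card + 2 := by
      rw [Finset.card_union_of_disjoint hdj.symm, Finset.card_insert_of_notMem (by simp [hne]),
        Finset.card_singleton]
    refine ⟨hd, hpX, by rw [h2, h3, hc], ?_⟩
    intro hk
    rw [h2] at hk
    unfold signF
    rw [Finset.prod_union hd.symm, Finset.prod_insert (by simp [hpne]), Finset.prod_singleton]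
    exact hsg (by omega)

/-! ### The vertex set of the link in the lift -/

def liftEquiv (hmem : σ' ∈ localLift X f k) (h1 : σ'.card + 1 ≤ k) :
    linkVert (localLift X f k) σ' ≃ (linkVert X (proj σ') ⊕ linkVert X (proj σ')) where
  toFun x := if x.1.2 = true
    then Sum.inl ⟨x.1.1, (vert_iff hmem h1 x.1.1 x.1.2).1 (by rw [Prod.mk.eta]; exact x.2)⟩
    else Sum.inr ⟨x.1.1, (vert_iff hmem h1 x.1.1 x.1.2).1 (by rw [Prod.mk.eta]; exact x.2)⟩
  invFun s := Sum.elim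
    (fun v => ⟨(v.1, true), (vert_iff hmem h1 v.1 true).2 v.2⟩)
    (fun v => ⟨(v.1, false), (vert_iff hmem h1 v.1 false).2 v.2⟩) s
  left_inv := by rintro ⟨⟨v, b⟩, h⟩; cases b <;> rfl
  right_inv := by rintro (v | v) <;> rfl

/-- the two kinds of blocks of the random walk matrix of the link in the lift -/
def blockMat (X : Finset (Finset V)) (f : Finset V → ℤ) (k : ℕ) (σ' : Finset (V × Bool))
    (dd : ℕ) (t : Bool) :
    Matrix (linkVert X (proj σ')) (linkVert X (proj σ')) ℝ :=
  fun v w => if v.1 ≠ w.1 ∧ {v.1, w.1} ∈ link X (proj σ') ∧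
      (σ'.card + 2 = k + 1 → signF σ' * (if t then 1 else -1) = f (proj σ' ∪ {v.1, w.1}))
    then (dd : ℝ)⁻¹ else 0

lemma linkRW_lift_apply (hmem : σ' ∈ localLift X f k) (h1 : σ'.card + 1 ≤ k) (dd : ℕ)
    (x y : linkVert (localLift X f k) σ') :
    linkRW (localLift X f k) σ' dd x y =
      if x.1.1 ≠ y.1.1 ∧ {x.1.1, y.1.1} ∈ link X (proj σ') ∧
        (σ'.card + 2 = k + 1 → signF σ' * (sgn x.1.2 * sgn y.1.2) = f (proj σ' ∪ {x.1.1, y.1.1}))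
      then (dd:ℝ)⁻¹ else 0 := by
  obtain ⟨⟨xv, xb⟩, hx⟩ := x
  obtain ⟨⟨yv, yb⟩, hy⟩ := y
  simp only [linkRW]
  by_cases hvw : xv = yv
  · subst hvw
    rw [if_neg, if_neg]
    · rintro ⟨h, -⟩; exact h rfl
    · rintro ⟨hne, hmem2⟩
      have hbc : xb ≠ yb := fun h => hne (by simp [h])
      exact not_mem_link_same_fst hmem xv xb yb hbc hmem2
  · have h2 : ((xv,xb) : V × Bool) ≠ (yv,yb) := by simp [hvw]
    have hiff : (((xv,xb) : V × Bool) ≠ (yv,yb) ∧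
        {(xv,xb),(yv,yb)} ∈ link (localLift X f k) σ') ↔
        (xv ≠ yv ∧ {xv,yv} ∈ link X (proj σ') ∧
          (σ'.card + 2 = k + 1 → signF σ' * (sgn xb * sgn yb) = f (proj σ' ∪ {xv,yv}))) := by
      rw [edge_iff hmem h1 xv yv hvw xb yb]
      simp [h2, hvw]
    exact if_congr hiff rfl rfl

lemma liftEquiv_symm_inl (hmem : σ' ∈ localLift X f k) (h1 : σ'.card + 1 ≤ k)
    (v : linkVert X (proj σ')) :
    (liftEquiv hmem h1).symm (Sum.inl v) = ⟨(v.1, true), (vert_iff hmem h1 v.1 true).2 v.2⟩ := rfl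

lemma liftEquiv_symm_inr (hmem : σ' ∈ localLift X f k) (h1 : σ'.card + 1 ≤ k)
    (v : linkVert X (proj σ')) :
    (liftEquiv hmem h1).symm (Sum.inr v) = ⟨(v.1, false), (vert_iff hmem h1 v.1 false).2 v.2⟩ := rfl

lemma reindex_linkRW (hmem : σ' ∈ localLift X f k) (h1 : σ'.card + 1 ≤ k) (dd : ℕ) :
    Matrix.reindex (liftEquiv hmem h1) (liftEquiv hmem h1) (linkRW (localLift X f k) σ' dd)
      = Matrix.fromBlocks (blockMat X f k σ' dd true) (blockMat X f k σ' dd false)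
          (blockMat X f k σ' dd false) (blockMat X f k σ' dd true) := by
  ext i j
  cases i <;> cases j <;>
  · simp only [Matrix.reindex_apply, Matrix.submatrix_apply, Matrix.fromBlocks_apply₁₁,
      Matrix.fromBlocks_apply₁₂, Matrix.fromBlocks_apply₂₁, Matrix.fromBlocks_apply₂₂]
    rw [linkRW_lift_apply hmem h1 dd]
    simp only [liftEquiv_symm_inl, liftEquiv_symm_inr]
    simp only [blockMat, liftEquiv, Equiv.coe_fn_symm_mk, Sum.elim_inl, Sum.elim_inr, sgn]
    norm_num


lemma charpoly_lift_low (hmem : σ' ∈ localLift X f k) (h1 : σ'.card + 1 ≤ k)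
    (hlow : σ'.card + 2 ≠ k + 1) (dd : ℕ) :
    (linkRW (localLift X f k) σ' (2 * dd)).charpoly
      = (linkRW X (proj σ') dd).charpoly * Polynomial.X ^ Fintype.card (linkVert X (proj σ')) := by
  rw [← Matrix.charpoly_reindex (liftEquiv hmem h1), reindex_linkRW hmem h1,
    charpoly_fromBlocks_comm']
  have hbm : ∀ t, blockMat X f k σ' (2*dd) t = fun v w =>
      if v.1 ≠ w.1 ∧ {v.1,w.1} ∈ link X (proj σ') then ((2*dd : ℕ) : ℝ)⁻¹ else 0 := by
    intro t
    funext v w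
    simp [blockMat, hlow]
  have hsum : blockMat X f k σ' (2*dd) true + blockMat X f k σ' (2*dd) false
      = linkRW X (proj σ') dd := by
    ext v w
    rw [Matrix.add_apply, hbm, hbm]
    simp only [linkRW]
    by_cases hc : v.1 ≠ w.1 ∧ {v.1,w.1} ∈ link X (proj σ')
    · simp only [if_pos hc]
      have h2 : ((2*dd:ℕ):ℝ) = 2 * (dd:ℝ) := by push_cast; ring
      rw [h2, mul_inv]
      ring
    · simp only [if_neg hc]
      ring
  have hdiff : blockMat X f k σ' (2*dd) true - blockMat X f k σ' (2*dd) false = 0 := by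
    rw [hbm, hbm]; exact sub_self _
  rw [hsum, hdiff, charpoly_zero']

lemma charpoly_lift_top (hmem : σ' ∈ localLift X f k) (h1 : σ'.card + 1 ≤ k)
    (htop : σ'.card + 2 = k + 1) (hf : ∀ τ, f τ = 1 ∨ f τ = -1) (dd : ℕ) :
    (linkRW (localLift X f k) σ' dd).charpoly
      = (linkRW X (proj σ') dd).charpoly *
        (linkRWSigned X (proj σ') dd (fun e => signF σ' * f (proj σ' ∪ e))).charpoly := by
  rw [← Matrix.charpoly_reindex (liftEquiv hmem h1), reindex_linkRW hmem h1,
    charpoly_fromBlocks_comm']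
  have hs2 : signF σ' = 1 ∨ signF σ' = -1 := mul_self_eq_one_iff.1 (signF_mul_self σ')
  have hsum : blockMat X f k σ' dd true + blockMat X f k σ' dd false
      = linkRW X (proj σ') dd := by
    ext v w
    simp only [Matrix.add_apply, blockMat, linkRW]
    by_cases hc : v.1 ≠ w.1 ∧ {v.1,w.1} ∈ link X (proj σ')
    · obtain ⟨hc1, hc2⟩ := hc
      rcases hs2 with h | h <;> rcases hf (proj σ' ∪ {v.1, w.1}) with h' | h' <;>
        rw [Finset.union_insert, union_single] at h' <;> simp [hc1, hc2, htop, h, h']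
    · have hC : ∀ P : Prop, ¬(v.1 ≠ w.1 ∧ {v.1,w.1} ∈ link X (proj σ') ∧ P) :=
        fun P h => hc ⟨h.1, h.2.1⟩
      rw [if_neg (hC _), if_neg (hC _), if_neg hc]
      ring
  have hdiff : blockMat X f k σ' dd true - blockMat X f k σ' dd false
      = linkRWSigned X (proj σ') dd (fun e => signF σ' * f (proj σ' ∪ e)) := by
    ext v w
    simp only [Matrix.sub_apply, blockMat, linkRWSigned]
    by_cases hc : v.1 ≠ w.1 ∧ {v.1,w.1} ∈ link X (proj σ')
    · obtain ⟨hc1, hc2⟩ := hc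
      rcases hs2 with h | h <;> rcases hf (proj σ' ∪ {v.1, w.1}) with h' | h' <;>
        rw [Finset.union_insert, union_single] at h' <;> simp [hc1, hc2, htop, h, h'] <;> norm_num [neg_div, one_div]
    · have hC : ∀ P : Prop, ¬(v.1 ≠ w.1 ∧ {v.1,w.1} ∈ link X (proj σ') ∧ P) :=
        fun P h => hc ⟨h.1, h.2.1⟩
      rw [if_neg (hC _), if_neg (hC _), if_neg hc]
      ring
  rw [hsum, hdiff]

end Aux

/-- for a face `σ'` of the `f`-local lift of a
`(d₀,…,d_{k-1})`-regular complex `X`, with `σ = π(σ')`: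
if `dim σ' < k-2` then the second largest in absolute value eigenvalue of the random
walk matrix of the 1-skeleton of the link of `σ'` in the lift equals that of `X_σ`;
if `dim σ' = k-2` then the spectrum of the random walk matrix of the link of `σ'`
is the union (with multiplicity) of the spectra of `A_σ` and of the signed matrix
`A_σ^{f_{σ'}}` (stated as a product of characteristic polynomials). -/

theorem localLift_link_spectra {V : Type*} [Fintype V] [DecidableEq V]
    (k : ℕ) (hk : 2 ≤ k) (X : Finset (Finset V)) (hdc : DownwardClosed X)
    (hpure : Pure X k) (d : ℕ → ℕ) (hreg : Regular X k d)
    (f : Finset V → ℤ) (hf : ∀ τ, f τ = 1 ∨ f τ = -1)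
    (σ' : Finset (V × Bool)) (hmem : σ' ∈ localLift X f k) :
    (σ'.card < k - 1 →
      lam (linkRW (localLift X f k) σ' (2 * d σ'.card)) =
        lam (linkRW X (proj σ') (d σ'.card))) ∧
    (σ'.card = k - 1 →
      (linkRW (localLift X f k) σ' (d (k - 1))).charpoly =
        (linkRW X (proj σ') (d (k - 1))).charpoly *
          (linkRWSigned X (proj σ') (d (k - 1))
            (fun e => signF σ' * f (proj σ' ∪ e))).charpoly) := by
  constructor
  · intro hlt
    have h1 : σ'.card + 1 ≤ k := by omega
    have hlow : σ'.card + 2 ≠ k + 1 := by omega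
    exact lam_eq_of_charpoly _ _ _ (charpoly_lift_low hmem h1 hlow (d σ'.card))
  · intro heq
    have h1 : σ'.card + 1 ≤ k := by omega
    have htop : σ'.card + 2 = k + 1 := by omega
    exact charpoly_lift_top hmem h1 htop hf (d (k-1))

end HDX
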